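/- arXiv:2502.18038 — 3 statements merged into one kernel-verified Lean document; each statement's English description precedes it below -/
import Mathlib

section
/- Suppose Assumption K holds. Then for each ℓ ∈ {0, 1, 2, 3} there exists a constant C such that for all n ∈ ℕ and all h ∈ (0, 1] with nh ≥ 1, sup_{t ≥ h} |S_ℓ(t) − κ_ℓ| ≤ C/(nh). -/
open MeasureTheory Filter Real Set
open scoped ENNReal NNReal Topology

noncomputable section

/-- The Generalized Extreme Value (GEV) cumulative distribution function. -/
def gevCDF (γ μ σ : ℝ) (x : ℝ) : ℝ :=
  if γ = 0 then Real.exp (-Real.exp (-(x - μ) / σ))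
  else if 0 < 1 + γ * (x - μ) / σ then Real.exp (-(1 + γ * (x - μ) / σ) ^ (-(1 / γ)))
  else if 0 < γ then 0 else 1

/-- The `p`-quantile of the GEV distribution with parameters `(γ, μ, σ)`. -/
def gevQuantile (γ μ σ p : ℝ) : ℝ :=
  if γ = 0 then μ - σ * Real.log (-Real.log p)
  else μ + σ * ((-Real.log p) ^ (-γ) - 1) / γ

/-- σ-field of the past, F_{-∞}^k = σ(ε_i : i ≤ k). -/
def sigmaPast {Ω : Type*} (ε : ℤ → Ω → ℝ) (k : ℤ) : MeasurableSpace Ω :=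
  ⨆ i : {i : ℤ // i ≤ k}, MeasurableSpace.comap (ε i) inferInstance

/-- σ-field of the future, F_j^∞ = σ(ε_i : i ≥ j). -/
def sigmaFuture {Ω : Type*} (ε : ℤ → Ω → ℝ) (j : ℤ) : MeasurableSpace Ω :=
  ⨆ i : {i : ℤ // j ≤ i}, MeasurableSpace.comap (ε i) inferInstance

/-- Strong (α-) mixing coefficients. -/
def alphaMix {Ω : Type*} [MeasurableSpace Ω] (P : Measure Ω) (ε : ℤ → Ω → ℝ) (m : ℕ) : ℝ :=
  sSup {x : ℝ | ∃ (k j : ℤ) (A B : Set Ω),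
    k < j - (m : ℤ) ∧ MeasurableSet[sigmaPast ε k] A ∧ MeasurableSet[sigmaFuture ε j] B ∧
    x = |(P (A ∩ B)).toReal - (P A).toReal * (P B).toReal|}

/-- The process is strongly mixing if α(m) → 0. -/
def StronglyMixing {Ω : Type*} [MeasurableSpace Ω] (P : Measure Ω) (ε : ℤ → Ω → ℝ) : Prop :=
  Tendsto (fun m => alphaMix P ε m) atTop (𝓝 0)

/-- Strict stationarity of the process. -/
def StrictlyStationary {Ω : Type*} [MeasurableSpace Ω] (P : Measure Ω) (ε : ℤ → Ω → ℝ) : Prop :=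
  ∀ (k : ℤ) (m : ℕ) (idx : Fin m → ℤ) (s : Set (Fin m → ℝ)), MeasurableSet s →
    P {ω | (fun j => ε (idx j + k) ω) ∈ s} = P {ω | (fun j => ε (idx j) ω) ∈ s}

/-- Assumption K on the kernel. -/
def AssumpK (K : ℝ → ℝ) : Prop :=
  (∀ x, 0 ≤ K x) ∧ (∀ x, x ∉ Set.Icc (-1 : ℝ) 0 → K x = 0) ∧
  (∫ x in (-1 : ℝ)..0, K x) = 1 ∧
  ∃ C : ℝ≥0, LipschitzOnWith C K (Set.Ioo (-1 : ℝ) 0)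

/-- Kernel moments κ_ℓ. -/
def kappa (K : ℝ → ℝ) (l : ℕ) : ℝ := ∫ x in (-1 : ℝ)..0, x ^ l * K x

/-- S_ℓ(t). -/
def Sl (K : ℝ → ℝ) (n : ℕ) (h : ℝ) (l : ℕ) (t : ℝ) : ℝ :=
  (1 / (n * h)) * ∑' i : ℕ, (((i : ℝ) - n * t) / (n * h)) ^ l * K (((i : ℝ) - n * t) / (n * h))

/-- R_ℓ(t). -/
def Rl (K : ℝ → ℝ) (X : ℕ → ℝ) (n : ℕ) (h : ℝ) (l : ℕ) (t : ℝ) : ℝ :=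
  (1 / (n * h)) * ∑' i : ℕ,
    X i * (((i : ℝ) - n * t) / (n * h)) ^ l * K (((i : ℝ) - n * t) / (n * h))

/-- One-sided local linear estimator with bandwidth h. -/
def muHat (K : ℝ → ℝ) (X : ℕ → ℝ) (n : ℕ) (h : ℝ) (t : ℝ) : ℝ :=
  (Sl K n h 2 t * Rl K X n h 0 t - Sl K n h 1 t * Rl K X n h 1 t) /
    (Sl K n h 0 t * Sl K n h 2 t - Sl K n h 1 t ^ 2)

/-- The Jackknife bias-reduced estimator. -/
def muTilde (K : ℝ → ℝ) (X : ℕ → ℝ) (n : ℕ) (hn : ℝ) (t : ℝ) : ℝ :=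
  2 * muHat K X n (hn / Real.sqrt 2) t - muHat K X n hn t

/-- Equivalent local linear kernel b̄K. -/
def barK (K : ℝ → ℝ) (x : ℝ) : ℝ :=
  (kappa K 2 - kappa K 1 * x) / (kappa K 0 * kappa K 2 - kappa K 1 ^ 2) * K x

/-- The Jackknife kernel K*. -/
def Kstar (K : ℝ → ℝ) (x : ℝ) : ℝ :=
  2 * Real.sqrt 2 * barK K (Real.sqrt 2 * x) - barK K x

/-- Assumption M: μ twice differentiable with Lipschitz second derivative. -/
def AssumpM (μ : ℝ → ℝ) : Prop :=
  (∀ x, DifferentiableAt ℝ μ x) ∧ (∀ x, DifferentiableAt ℝ (deriv μ) x) ∧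
  ∃ C : ℝ≥0, LipschitzWith C (deriv (deriv μ))

/-- Assumption E on the error process (with scaling sequences a, b, limit GEV cdf G
and scaling exponent γ). -/
def AssumpE {Ω : Type*} [MeasurableSpace Ω] (P : Measure Ω) (ε : ℤ → Ω → ℝ)
    (a b : ℕ → ℝ) (G : ℝ → ℝ) (γ : ℝ) : Prop :=
  (∀ i, Measurable (ε i)) ∧
  StrictlyStationary P ε ∧
  (∀ i, ∫ ω, ε i ω ∂P = 0) ∧
  StronglyMixing P ε ∧
  (∃ δ > (0 : ℝ), ∃ C : ℝ, (∀ i : ℤ, ∫ ω, |ε i ω| ^ (4 + δ) ∂P ≤ C) ∧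
    Summable (fun i : ℕ => alphaMix P ε (i + 1) ^ (1 / 6 - 1 / δ))) ∧
  (∀ n, 0 < a n) ∧
  (∃ γ₀ μ₀ σ₀ : ℝ, 0 < σ₀ ∧ G = gevCDF γ₀ μ₀ σ₀) ∧
  (∃ (Ω' : Type) (_ : MeasurableSpace Ω') (Q : Measure Ω') (_ : IsProbabilityMeasure Q)
      (εt : ℕ → Ω' → ℝ),
    (∀ i, Measurable (εt i)) ∧
    ProbabilityTheory.iIndepFun εt Q ∧
    (∀ i, Measure.map (εt i) Q = Measure.map (ε 1) P) ∧
    (∀ x : ℝ, Tendsto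
      (fun n => (Q {ω | ∀ i ∈ Finset.Icc 1 n, |εt i ω| ≤ a n * x + b n}).toReal)
      atTop (𝓝 (G x)))) ∧
  (∃ x L : ℝ, Tendsto
      (fun n : ℕ => (P {ω | ∀ i ∈ Finset.Icc (1 : ℤ) (n : ℤ), |ε i ω| ≤ a n * x + b n}).toReal)
      atTop (𝓝 L)) ∧
  (∀ r : ℕ → ℕ, (∀ n, 1 ≤ r n) → Tendsto (fun n => (r n : ℝ) / n) atTop (𝓝 0) →
    ∀ᶠ n in atTop,
      a n / a (r n) = ((n : ℝ) / r n) ^ γ ∧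
      b n = b (r n) + a (r n) * (((n : ℝ) / r n) ^ γ - 1) / γ)


/-- The bandwidth rate condition \eqref{eq:conv_rate}. -/
def BandwidthRate (h a : ℕ → ℝ) : Prop :=
  (∀ n, h n ∈ Set.Ioo (0 : ℝ) 1) ∧ Tendsto h atTop (𝓝 0) ∧
  Tendsto (fun n : ℕ => (1 / a n) * (h n ^ 3 +
    Real.sqrt (|Real.log (h n)| / (n * h n)) + 1 / (n * h n ^ ((5 : ℝ) / 4))))
    atTop (𝓝 0)

/-- Assumption T: the extremal index ρ, the GEV parameters θ_ρ = (γρ, μρ, σρ) of 𝒢^ρ and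
estimators (γ̂ₙ, μ̂ₙ, σ̂ₙ) of θₙ = (γρ, aₙ μρ + bₙ, aₙ σρ) satisfying the stated
consistency rates. -/
def AssumpT {Ω : Type*} [MeasurableSpace Ω] (P : Measure Ω) (ε : ℤ → Ω → ℝ)
    (a b : ℕ → ℝ) (G : ℝ → ℝ) (ρ γρ μρ σρ : ℝ) (γhat μhat σhat : ℕ → Ω → ℝ) : Prop :=
  ρ ∈ Set.Ioc (0 : ℝ) 1 ∧
  (∀ x : ℝ, Tendsto (fun n : ℕ =>
      (P {ω | ∀ i ∈ Finset.Icc (1 : ℤ) (n : ℤ), |ε i ω| ≤ a n * x + b n}).toReal)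
    atTop (𝓝 (G x ^ ρ))) ∧
  0 < σρ ∧ (∀ x, G x ^ ρ = gevCDF γρ μρ σρ x) ∧
  (∀ n, Measurable (γhat n)) ∧ (∀ n, Measurable (μhat n)) ∧ (∀ n, Measurable (σhat n)) ∧
  (∀ η > (0 : ℝ),
    Tendsto (fun n => (P {ω | η < |γhat n ω - γρ|}).toReal) atTop (𝓝 0)) ∧
  (∀ η > (0 : ℝ),
    Tendsto (fun n => (P {ω | η < |(μhat n ω - (a n * μρ + b n)) / a n|}).toReal)
      atTop (𝓝 0)) ∧
  (∀ η > (0 : ℝ),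
    Tendsto (fun n => (P {ω | η < |(σhat n ω - a n * σρ) / a n|}).toReal) atTop (𝓝 0))

/-- The weight-approximation error Δₙ(i, t). -/
def DeltaK (K : ℝ → ℝ) (n : ℕ) (h : ℝ) (i : ℕ) (t : ℝ) : ℝ :=
  (Sl K n h 2 t - Sl K n h 1 t * (((i : ℝ) - n * t) / (n * h))) /
      (Sl K n h 0 t * Sl K n h 2 t - Sl K n h 1 t ^ 2) *
      K (((i : ℝ) - n * t) / (n * h)) -
    barK K (((i : ℝ) - n * t) / (n * h))

/-- L²-norm of a real function. -/
def l2norm (f : ℝ → ℝ) : ℝ := Real.sqrt (∫ x, f x ^ 2)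


private lemma riemann_core (f : ℝ → ℝ) (B L' : ℝ) (hB : 0 ≤ B) (hL' : 0 ≤ L')
    (h0 : ∀ x : ℝ, x ∉ Set.Icc (-1 : ℝ) 0 → f x = 0)
    (hb : ∀ x ∈ Set.Icc (-1 : ℝ) 0, |f x| ≤ B)
    (hlip : ∀ x ∈ Set.Ioo (-1 : ℝ) 0, ∀ y ∈ Set.Ioo (-1 : ℝ) 0, |f x - f y| ≤ L' * |x - y|)
    (hint : Integrable f) (N a : ℝ) (hN : 1 ≤ N) (ha : N ≤ a) :
    |(1 / N) * ∑' i : ℕ, f (((i : ℝ) - a) / N) - ∫ u in (-1 : ℝ)..0, f u| ≤ (5 * B + L') / N := by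
  have hN0 : 0 < N := by linarith
  have ha0 : 0 ≤ a := by linarith
  set i₀ : ℕ := ⌈a - N⌉₊ with hi₀def
  set i₁ : ℕ := ⌊a⌋₊ with hi₁def
  have hI0l : a - N ≤ (i₀ : ℝ) := Nat.le_ceil _
  have hI0u : (i₀ : ℝ) < a - N + 1 := Nat.ceil_lt_add_one (by linarith)
  have hI1u : (i₁ : ℝ) ≤ a := Nat.floor_le ha0
  have hI1l : a < (i₁ : ℝ) + 1 := Nat.lt_floor_add_one a
  have hii : i₀ ≤ i₁ := Nat.ceil_le.mpr (by linarith)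
  set m : ℕ := i₁ - i₀ with hmdef
  have hmr : (m : ℝ) = (i₁ : ℝ) - (i₀ : ℝ) := by
    rw [hmdef]; push_cast [Nat.cast_sub hii]; ring
  have hmN : (m : ℝ) ≤ N := by rw [hmr]; linarith
  set c : ℝ := ((i₀ : ℝ) - a) / N with hcdef
  set y : ℕ → ℝ := fun k => c + (k : ℝ) / N with hydef
  have hy0 : y 0 = c := by simp [hydef]
  have hxy : ∀ k : ℕ, (((i₀ + k : ℕ) : ℝ) - a) / N = y k := by
    intro k; simp only [hydef, hcdef]; push_cast; ring
  have hcl : -1 ≤ c := by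
    rw [hcdef, le_div_iff₀ hN0]; linarith
  have hcu : c ≤ -1 + 1 / N := by
    rw [hcdef, div_le_iff₀ hN0]
    have h1 : (-1 + 1 / N) * N = -N + 1 := by field_simp
    rw [h1]; linarith
  have hymx : y m = ((i₁ : ℝ) - a) / N := by
    rw [← hxy m, Nat.add_sub_cancel' hii]
  have hymu : y m ≤ 0 := by
    rw [hymx, div_le_iff₀ hN0]; linarith
  have hyml : -(1 / N) ≤ y m := by
    rw [hymx, le_div_iff₀ hN0]
    have h1 : -(1 / N) * N = -1 := by field_simp
    rw [h1]; linarith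
  have hts : ∑' i : ℕ, f (((i : ℝ) - a) / N) = ∑ i ∈ Finset.Icc i₀ i₁, f (((i : ℝ) - a) / N) := by
    refine tsum_eq_sum ?_
    intro i hi
    rw [Finset.mem_Icc, not_and_or, not_le, not_le] at hi
    refine h0 _ ?_
    intro hmem
    rw [Set.mem_Icc] at hmem
    rcases hi with h | h
    · have h1 : (i : ℝ) < a - N := Nat.lt_ceil.mp h
      have h2 : ((i : ℝ) - a) / N < -1 := by
        rw [div_lt_iff₀ hN0]; linarith
      linarith [hmem.1]
    · have h1 : a < (i : ℝ) := (Nat.floor_lt ha0).mp h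
      have h2 : 0 < ((i : ℝ) - a) / N := div_pos (by linarith) hN0
      linarith [hmem.2]
  have hsum2 : ∑ i ∈ Finset.Icc i₀ i₁, f (((i : ℝ) - a) / N)
      = (∑ k ∈ Finset.range m, f (y (k + 1))) + f (y 0) := by
    rw [← Finset.Ico_add_one_right_eq_Icc, Finset.sum_Ico_eq_sum_range]
    have h1 : i₁ + 1 - i₀ = m + 1 := by omega
    rw [h1, Finset.sum_range_succ']
    congr 1
    · exact Finset.sum_congr rfl fun k _ => by rw [hxy]
    · rw [hxy]
  have hIIf : ∀ u v : ℝ, IntervalIntegrable f volume u v := fun u v => hint.intervalIntegrable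
  have htel : ∑ k ∈ Finset.range m, ∫ u in y k..y (k + 1), f u = ∫ u in (y 0)..(y m), f u :=
    intervalIntegral.sum_integral_adjacent_intervals fun k _ => hIIf _ _
  have hsplit : (∫ u in (-1 : ℝ)..0, f u)
      = (∫ u in (-1 : ℝ)..(y 0), f u) + (∫ u in (y 0)..(y m), f u) + ∫ u in (y m)..0, f u := by
    rw [intervalIntegral.integral_add_adjacent_intervals (hIIf (-1) (y 0)) (hIIf (y 0) (y m)),
      intervalIntegral.integral_add_adjacent_intervals (hIIf (-1) (y m)) (hIIf (y m) 0)]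
  have hyle : ∀ {j j' : ℕ}, j ≤ j' → y j ≤ y j' := by
    intro j j' hjj'
    simp only [hydef]
    have h1 : (j : ℝ) ≤ (j' : ℝ) := Nat.cast_le.mpr hjj'
    have h2 : (j : ℝ) / N ≤ (j' : ℝ) / N := by gcongr
    linarith
  have hyIcc : ∀ j : ℕ, j ≤ m → y j ∈ Set.Icc (-1 : ℝ) 0 := by
    intro j hj
    constructor
    · have h1 : y 0 ≤ y j := hyle (Nat.zero_le j)
      rw [hy0] at h1; linarith
    · exact le_trans (hyle hj) hymu
  have hstep : ∀ k : ℕ, y (k + 1) - y k = 1 / N := by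
    intro k; simp only [hydef]; push_cast; ring
  clear_value y c
  have hNinv : (0 : ℝ) < 1 / N := by positivity
  have h1N : 1 / N ≤ 1 := by rw [div_le_one hN0]; exact hN
  have hterm : ∀ k ∈ Finset.range m,
      |(1 / N) * f (y (k + 1)) - ∫ u in y k..y (k + 1), f u|
        ≤ L' / N ^ 2 + (if k = m - 1 then 2 * B / N else 0) := by
    intro k hk
    rw [Finset.mem_range] at hk
    have hk1m : k + 1 ≤ m := hk
    have hIcck : y k ∈ Set.Icc (-1 : ℝ) 0 := hyIcc k (le_of_lt hk)
    have hIcck1 : y (k + 1) ∈ Set.Icc (-1 : ℝ) 0 := hyIcc (k + 1) hk1m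
    have hlen : y (k + 1) - y k = 1 / N := hstep k
    have hle : y k ≤ y (k + 1) := by linarith
    by_cases hkm : k = m - 1
    · rw [if_pos hkm]
      have h1 : |(1 / N) * f (y (k + 1))| ≤ (1 / N) * B := by
        rw [abs_mul, abs_of_pos hNinv]
        exact mul_le_mul_of_nonneg_left (hb _ hIcck1) (le_of_lt hNinv)
      have h2 : |∫ u in y k..y (k + 1), f u| ≤ B * (1 / N) := by
        have h3 : ∀ u ∈ Set.uIoc (y k) (y (k + 1)), ‖f u‖ ≤ B := by
          intro u hu
          rw [Set.uIoc_of_le hle, Set.mem_Ioc] at hu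
          rw [Real.norm_eq_abs]
          exact hb u ⟨by linarith [hIcck.1, hu.1], le_trans hu.2 hIcck1.2⟩
        have h4 := intervalIntegral.norm_integral_le_of_norm_le_const h3
        rw [Real.norm_eq_abs] at h4
        calc |∫ u in y k..y (k + 1), f u| ≤ B * |y (k + 1) - y k| := h4
          _ = B * (1 / N) := by rw [hlen, abs_of_pos hNinv]
      have h5 : (0:ℝ) ≤ L' / N ^ 2 := by positivity
      calc |(1 / N) * f (y (k + 1)) - ∫ u in y k..y (k + 1), f u|
          ≤ |(1 / N) * f (y (k + 1))| + |∫ u in y k..y (k + 1), f u| := abs_sub _ _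
        _ ≤ (1 / N) * B + B * (1 / N) := add_le_add h1 h2
        _ ≤ L' / N ^ 2 + 2 * B / N := by
            have h6 : (1 / N) * B + B * (1 / N) = 2 * B / N := by ring
            linarith
    · rw [if_neg hkm, add_zero]
      have hk1m' : k + 1 < m := by omega
      have hm1 : m - 1 + 1 = m := by omega
      have h2 : y (m - 1) = y m - 1 / N := by
        have h3 := hstep (m - 1); rw [hm1] at h3; linarith
      have h3 : y (k + 1) ≤ y (m - 1) := hyle (by omega)
      have h5 : y 1 = y 0 + 1 / N := by have := hstep 0; linarith
      have hy1o : y (k + 1) ∈ Set.Ioo (-1 : ℝ) 0 := by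
        constructor
        · have h4 : y 1 ≤ y (k + 1) := hyle (by omega)
          rw [hy0] at h5
          linarith
        · linarith
      have hconst : (1 / N) * f (y (k + 1)) = ∫ u in y k..y (k + 1), f (y (k + 1)) := by
        rw [intervalIntegral.integral_const, smul_eq_mul, hlen]
      rw [hconst, ← intervalIntegral.integral_sub (intervalIntegrable_const) (hIIf _ _)]
      have hbnd : ∀ u ∈ Set.uIoc (y k) (y (k + 1)), ‖f (y (k + 1)) - f u‖ ≤ L' / N := by
        intro u hu
        rw [Set.uIoc_of_le hle, Set.mem_Ioc] at hu
        have huo : u ∈ Set.Ioo (-1 : ℝ) 0 :=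
          ⟨lt_of_le_of_lt hIcck.1 hu.1, lt_of_le_of_lt hu.2 hy1o.2⟩
        rw [Real.norm_eq_abs]
        calc |f (y (k + 1)) - f u| ≤ L' * |y (k + 1) - u| := hlip _ hy1o _ huo
          _ ≤ L' * (1 / N) := by
              refine mul_le_mul_of_nonneg_left ?_ hL'
              rw [abs_of_nonneg (by linarith [hu.2])]
              linarith [hu.1]
          _ = L' / N := by ring
      have h4 := intervalIntegral.norm_integral_le_of_norm_le_const hbnd
      rw [Real.norm_eq_abs] at h4
      calc |∫ u in y k..y (k + 1), (f (y (k + 1)) - f u)| ≤ L' / N * |y (k + 1) - y k| := h4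
        _ = L' / N ^ 2 := by rw [hlen, abs_of_pos hNinv]; ring
  have hsumB : ∑ k ∈ Finset.range m, (L' / N ^ 2 + (if k = m - 1 then 2 * B / N else 0))
      ≤ L' / N + 2 * B / N := by
    rw [Finset.sum_add_distrib, Finset.sum_const, Finset.card_range, nsmul_eq_mul]
    have h1 : ∑ k ∈ Finset.range m, (if k = m - 1 then 2 * B / N else 0) ≤ 2 * B / N := by
      rw [Finset.sum_ite_eq' (Finset.range m) (m - 1) (fun _ => 2 * B / N)]
      split
      · exact le_rfl
      · positivity
    have h2 : (m : ℝ) * (L' / N ^ 2) ≤ L' / N := by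
      have h3 : (m : ℝ) * (L' / N ^ 2) ≤ N * (L' / N ^ 2) :=
        mul_le_mul_of_nonneg_right hmN (by positivity)
      have h4 : N * (L' / N ^ 2) = L' / N := by field_simp
      linarith
    linarith
  have hb0 : |(1 / N) * f (y 0)| ≤ B / N := by
    rw [abs_mul, abs_of_pos hNinv]
    have h1 := hb (y 0) (hyIcc 0 (Nat.zero_le m))
    calc (1 / N) * |f (y 0)| ≤ (1 / N) * B := mul_le_mul_of_nonneg_left h1 (le_of_lt hNinv)
      _ = B / N := by ring
  have hbl : |∫ u in (-1 : ℝ)..(y 0), f u| ≤ B / N := by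
    have hle0 : (-1 : ℝ) ≤ y 0 := (hyIcc 0 (Nat.zero_le m)).1
    have h3 : ∀ u ∈ Set.uIoc (-1 : ℝ) (y 0), ‖f u‖ ≤ B := by
      intro u hu
      rw [Set.uIoc_of_le hle0, Set.mem_Ioc] at hu
      rw [Real.norm_eq_abs]
      exact hb u ⟨le_of_lt hu.1, le_trans hu.2 (hyIcc 0 (Nat.zero_le m)).2⟩
    have h4 := intervalIntegral.norm_integral_le_of_norm_le_const h3
    rw [Real.norm_eq_abs] at h4
    refine le_trans h4 ?_
    rw [abs_of_nonneg (by linarith)]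
    have h5 : y 0 - (-1) ≤ 1 / N := by rw [hy0]; linarith
    calc B * (y 0 - (-1)) ≤ B * (1 / N) := mul_le_mul_of_nonneg_left h5 hB
      _ = B / N := by ring
  have hbr : |∫ u in (y m)..0, f u| ≤ B / N := by
    have h3 : ∀ u ∈ Set.uIoc (y m) (0 : ℝ), ‖f u‖ ≤ B := by
      intro u hu
      rw [Set.uIoc_of_le hymu, Set.mem_Ioc] at hu
      rw [Real.norm_eq_abs]
      have hyml' : (-1 : ℝ) ≤ y m := by linarith [h1N]
      exact hb u ⟨by linarith [hu.1], hu.2⟩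
    have h4 := intervalIntegral.norm_integral_le_of_norm_le_const h3
    rw [Real.norm_eq_abs] at h4
    refine le_trans h4 ?_
    rw [abs_of_nonneg (by linarith)]
    have h5 : (0 : ℝ) - y m ≤ 1 / N := by linarith
    calc B * (0 - y m) ≤ B * (1 / N) := mul_le_mul_of_nonneg_left h5 hB
      _ = B / N := by ring
  rw [hts, hsum2]
  have key : (1 / N) * ((∑ k ∈ Finset.range m, f (y (k + 1))) + f (y 0)) - ∫ u in (-1 : ℝ)..0, f u
      = ((1 / N) * f (y 0) - (∫ u in (-1 : ℝ)..(y 0), f u) - ∫ u in (y m)..0, f u)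
        + ∑ k ∈ Finset.range m, ((1 / N) * f (y (k + 1)) - ∫ u in y k..y (k + 1), f u) := by
    rw [hsplit, Finset.sum_sub_distrib, htel, ← Finset.mul_sum]
    ring
  rw [key]
  have hA : |(1 / N) * f (y 0) - (∫ u in (-1 : ℝ)..(y 0), f u) - ∫ u in (y m)..0, f u|
      ≤ B / N + B / N + B / N := by
    calc |(1 / N) * f (y 0) - (∫ u in (-1 : ℝ)..(y 0), f u) - ∫ u in (y m)..0, f u|
        ≤ |(1 / N) * f (y 0) - ∫ u in (-1 : ℝ)..(y 0), f u| + |∫ u in (y m)..0, f u| :=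
          abs_sub _ _
      _ ≤ (|(1 / N) * f (y 0)| + |∫ u in (-1 : ℝ)..(y 0), f u|) + |∫ u in (y m)..0, f u| := by
          have := abs_sub ((1 / N) * f (y 0)) (∫ u in (-1 : ℝ)..(y 0), f u)
          linarith
      _ ≤ B / N + B / N + B / N := by linarith [hb0, hbl, hbr]
  have hS : |∑ k ∈ Finset.range m, ((1 / N) * f (y (k + 1)) - ∫ u in y k..y (k + 1), f u)|
      ≤ L' / N + 2 * B / N := by
    calc |∑ k ∈ Finset.range m, ((1 / N) * f (y (k + 1)) - ∫ u in y k..y (k + 1), f u)|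
        ≤ ∑ k ∈ Finset.range m, |(1 / N) * f (y (k + 1)) - ∫ u in y k..y (k + 1), f u| :=
          Finset.abs_sum_le_sum_abs _ _
      _ ≤ ∑ k ∈ Finset.range m, (L' / N ^ 2 + (if k = m - 1 then 2 * B / N else 0)) :=
          Finset.sum_le_sum hterm
      _ ≤ L' / N + 2 * B / N := hsumB
  calc |(1 / N) * f (y 0) - (∫ u in (-1 : ℝ)..(y 0), f u) - (∫ u in (y m)..0, f u)
        + ∑ k ∈ Finset.range m, ((1 / N) * f (y (k + 1)) - ∫ u in y k..y (k + 1), f u)|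
      ≤ |(1 / N) * f (y 0) - (∫ u in (-1 : ℝ)..(y 0), f u) - ∫ u in (y m)..0, f u|
        + |∑ k ∈ Finset.range m, ((1 / N) * f (y (k + 1)) - ∫ u in y k..y (k + 1), f u)| :=
        abs_add_le _ _
    _ ≤ (B / N + B / N + B / N) + (L' / N + 2 * B / N) := add_le_add hA hS
    _ = (5 * B + L') / N := by ring

private lemma pow_sub_le_aux (x y : ℝ) (hx : |x| ≤ 1) (hy : |y| ≤ 1) :
    ∀ l : ℕ, l ≤ 3 → |x ^ l - y ^ l| ≤ 3 * |x - y| := by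
  have hx1 := abs_le.mp hx
  have hy1 := abs_le.mp hy
  intro l hl
  interval_cases l
  · simp only [pow_zero, sub_self, abs_zero]
    positivity
  · simp only [pow_one]
    linarith [abs_nonneg (x - y)]
  · have h1 : x ^ 2 - y ^ 2 = (x - y) * (x + y) := by ring
    rw [h1, abs_mul]
    have h2 : |x + y| ≤ 3 := by
      calc |x + y| ≤ |x| + |y| := abs_add_le x y
        _ ≤ 3 := by linarith
    calc |x - y| * |x + y| ≤ |x - y| * 3 := mul_le_mul_of_nonneg_left h2 (abs_nonneg _)
      _ = 3 * |x - y| := by ring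
  · have h1 : x ^ 3 - y ^ 3 = (x - y) * (x ^ 2 + x * y + y ^ 2) := by ring
    rw [h1, abs_mul]
    have h2 : |x ^ 2 + x * y + y ^ 2| ≤ 3 := by
      calc |x ^ 2 + x * y + y ^ 2| ≤ |x ^ 2 + x * y| + |y ^ 2| := abs_add_le _ _
        _ ≤ |x ^ 2| + |x * y| + |y ^ 2| := by linarith [abs_add_le (x ^ 2) (x * y)]
        _ ≤ 3 := by
            rw [abs_pow, abs_pow, abs_mul]
            nlinarith [abs_nonneg x, abs_nonneg y]
    calc |x - y| * |x ^ 2 + x * y + y ^ 2| ≤ |x - y| * 3 :=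
        mul_le_mul_of_nonneg_left h2 (abs_nonneg _)
      _ = 3 * |x - y| := by ring


/-- Uniform Riemann-sum approximation: for each ℓ ∈ {0,1,2,3},
sup_{t ≥ h} |S_ℓ(t) − κ_ℓ| ≤ C/(n h). -/
theorem Sl_uniform_approximation (K : ℝ → ℝ) (hK : AssumpK K) :
    ∀ l : ℕ, l ≤ 3 → ∃ C : ℝ, ∀ (n : ℕ) (h : ℝ), 0 < h → h ≤ 1 → 1 ≤ (n : ℝ) * h →
      ∀ t : ℝ, h ≤ t → |Sl K n h l t - kappa K l| ≤ C / ((n : ℝ) * h) := by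
  obtain ⟨hKpos, hKsupp, hKint, L0, hKlip⟩ := hK
  intro l hl
  set L : ℝ := (L0 : ℝ) with hLdef
  have hL0 : 0 ≤ L := L0.coe_nonneg
  set M : ℝ := |K (-(1 : ℝ) / 2)| + L with hMdef
  have hM0 : 0 ≤ M := by positivity
  have hhalf : (-(1 : ℝ) / 2) ∈ Set.Ioo (-1 : ℝ) 0 := by norm_num
  have hMb : ∀ x ∈ Set.Ioo (-1 : ℝ) 0, |K x| ≤ M := by
    intro x hx
    have hd : dist (K x) (K (-(1 : ℝ) / 2)) ≤ L * dist x (-(1 : ℝ) / 2) :=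
      hKlip.dist_le_mul x hx _ hhalf
    rw [Real.dist_eq, Real.dist_eq] at hd
    have h1 : |x - -(1 : ℝ) / 2| ≤ 1 := by
      rw [abs_le]
      constructor
      · linarith [hx.1]
      · linarith [hx.2]
    have h2 : |K x - K (-(1 : ℝ) / 2)| ≤ L := by
      have h3 : L * |x - -(1 : ℝ) / 2| ≤ L * 1 := mul_le_mul_of_nonneg_left h1 hL0
      linarith
    calc |K x| = |(K x - K (-(1 : ℝ) / 2)) + K (-(1 : ℝ) / 2)| := by ring_nf
      _ ≤ |K x - K (-(1 : ℝ) / 2)| + |K (-(1 : ℝ) / 2)| := abs_add_le _ _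
      _ ≤ M := by rw [hMdef]; linarith
  set B : ℝ := M + |K (-1 : ℝ)| + |K (0 : ℝ)| with hBdef
  have hB : 0 ≤ B := by positivity
  set L' : ℝ := L + 3 * M with hL'def
  have hL'0 : 0 ≤ L' := by positivity
  set f : ℝ → ℝ := fun z => z ^ l * K z with hfdef
  have hf0 : ∀ z : ℝ, z ∉ Set.Icc (-1 : ℝ) 0 → f z = 0 := by
    intro z hz
    simp only [hfdef, hKsupp z hz, mul_zero]
  have hKB : ∀ z ∈ Set.Icc (-1 : ℝ) 0, |K z| ≤ B := by
    intro z hz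
    rw [Set.mem_Icc] at hz
    rcases eq_or_lt_of_le hz.1 with h | h
    · rw [← h, hBdef]
      have := abs_nonneg (K (0 : ℝ))
      linarith
    · rcases eq_or_lt_of_le hz.2 with h' | h'
      · rw [h', hBdef]
        have := abs_nonneg (K (-1 : ℝ))
        linarith
      · have h1 := hMb z ⟨h, h'⟩
        rw [hBdef]
        have := abs_nonneg (K (-1 : ℝ))
        have := abs_nonneg (K (0 : ℝ))
        linarith
  have hfb : ∀ z ∈ Set.Icc (-1 : ℝ) 0, |f z| ≤ B := by
    intro z hz
    have hz' := hz
    rw [Set.mem_Icc] at hz'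
    have hz1 : |z| ≤ 1 := abs_le.mpr ⟨by linarith [hz'.1], by linarith [hz'.2]⟩
    have h1 : |f z| ≤ |K z| := by
      calc |f z| = |z| ^ l * |K z| := by rw [hfdef]; rw [abs_mul, abs_pow]
        _ ≤ 1 * |K z| := mul_le_mul_of_nonneg_right (pow_le_one₀ (abs_nonneg z) hz1) (abs_nonneg _)
        _ = |K z| := one_mul _
    exact h1.trans (hKB z hz)
  have hflip : ∀ x ∈ Set.Ioo (-1 : ℝ) 0, ∀ y ∈ Set.Ioo (-1 : ℝ) 0,
      |f x - f y| ≤ L' * |x - y| := by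
    intro x hx y hy
    have hx1 : |x| ≤ 1 := abs_le.mpr ⟨by linarith [hx.1], by linarith [hx.2]⟩
    have hy1 : |y| ≤ 1 := abs_le.mpr ⟨by linarith [hy.1], by linarith [hy.2]⟩
    have hd : |K x - K y| ≤ L * |x - y| := by
      have h1 := hKlip.dist_le_mul x hx y hy
      rw [Real.dist_eq, Real.dist_eq] at h1
      exact h1
    have hp := pow_sub_le_aux x y hx1 hy1 l hl
    have heq : f x - f y = x ^ l * (K x - K y) + (x ^ l - y ^ l) * K y := by
      simp only [hfdef]; ring
    have hterm1 : |x ^ l * (K x - K y)| ≤ 1 * (L * |x - y|) := by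
      rw [abs_mul, abs_pow]
      exact mul_le_mul (pow_le_one₀ (abs_nonneg x) hx1) hd (abs_nonneg _) zero_le_one
    have hterm2 : |(x ^ l - y ^ l) * K y| ≤ (3 * |x - y|) * M := by
      rw [abs_mul]
      exact mul_le_mul hp (hMb y hy) (abs_nonneg _) (by positivity)
    calc |f x - f y| = |x ^ l * (K x - K y) + (x ^ l - y ^ l) * K y| := by rw [heq]
      _ ≤ |x ^ l * (K x - K y)| + |(x ^ l - y ^ l) * K y| := abs_add_le _ _
      _ ≤ 1 * (L * |x - y|) + (3 * |x - y|) * M := add_le_add hterm1 hterm2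
      _ = L' * |x - y| := by rw [hL'def]; ring
  have hcont : ContinuousOn f (Set.Ioo (-1 : ℝ) 0) := by
    have h1 : ContinuousOn K (Set.Ioo (-1 : ℝ) 0) := hKlip.continuousOn
    have h2 : ContinuousOn (fun z : ℝ => z ^ l) (Set.Ioo (-1 : ℝ) 0) :=
      (continuous_pow l).continuousOn
    exact h2.mul h1
  have hintIoo : IntegrableOn f (Set.Ioo (-1 : ℝ) 0) := by
    have h1 : AEStronglyMeasurable f (volume.restrict (Set.Ioo (-1 : ℝ) 0)) :=
      hcont.aestronglyMeasurable measurableSet_Ioo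
    refine Integrable.mono' (g := fun _ => B) ?_ h1 ?_
    · exact integrableOn_const (by simp [Real.volume_Ioo])
    · rw [ae_restrict_iff' measurableSet_Ioo]
      filter_upwards with z hz
      rw [Real.norm_eq_abs]
      exact hfb z ⟨le_of_lt hz.1, le_of_lt hz.2⟩
  have haeeq : (Set.Ioo (-1 : ℝ) 0).indicator f =ᵐ[volume] f := by
    have hsub : {u : ℝ | (Set.Ioo (-1 : ℝ) 0).indicator f u ≠ f u} ⊆ ({-1, 0} : Set ℝ) := by
      intro u hu
      by_contra hmem
      simp only [Set.mem_insert_iff, Set.mem_singleton_iff] at hmem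
      push_neg at hmem
      apply hu
      by_cases hcase : u ∈ Set.Ioo (-1 : ℝ) 0
      · rw [Set.indicator_of_mem hcase]
      · rw [Set.indicator_of_notMem hcase]
        refine (hf0 u ?_).symm
        intro hIcc
        rw [Set.mem_Icc] at hIcc
        rcases lt_or_eq_of_le hIcc.1 with h | h
        · rcases lt_or_eq_of_le hIcc.2 with h' | h'
          · exact hcase ⟨h, h'⟩
          · exact hmem.2 h'
        · exact hmem.1 h.symm
    have hnull : volume ({-1, 0} : Set ℝ) = 0 :=
      Set.Finite.measure_zero ((Set.finite_singleton (0:ℝ)).insert (-1)) volume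
    exact MeasureTheory.ae_iff.mpr (measure_mono_null hsub hnull)
  have hint : Integrable f := by
    have h1 : Integrable ((Set.Ioo (-1 : ℝ) 0).indicator f) :=
      (integrable_indicator_iff measurableSet_Ioo).mpr hintIoo
    exact h1.congr haeeq
  refine ⟨5 * B + L', ?_⟩
  intro n h hh0 hh1 hnh t ht
  have hNa : (n : ℝ) * h ≤ (n : ℝ) * t := mul_le_mul_of_nonneg_left ht (Nat.cast_nonneg n)
  have hmain := riemann_core f B L' hB hL'0 hf0 hfb hflip hint ((n : ℝ) * h) ((n : ℝ) * t) hnh hNa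
  simpa only [Sl, kappa, hfdef] using hmain

end
end

section
/- Suppose Assumption K holds; then κ₀κ₂ − κ₁² > 0, and there exist a constant C and c₀ > 0 such that for all n ∈ ℕ and h ∈ (0, 1] with nh ≥ c₀, sup_{t ≥ h} |(S_2(t)² − S_1(t) S_3(t))/(S_0(t) S_2(t) − S_1(t)²) − (κ₂² − κ₁κ₃)/(κ₀κ₂ − κ₁²)| ≤ C/(nh). -/
open MeasureTheory Filter Real Set
open scoped ENNReal NNReal Topology

noncomputable section

namespace BiasCUA

lemma intInt {φ : ℝ → ℝ} {B : ℝ} (hm : Measurable φ) (hb : ∀ x, |φ x| ≤ B)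
    (p q : ℝ) : IntervalIntegrable φ volume p q := by
  apply IntervalIntegrable.mono_fun' (g := fun _ => B) intervalIntegrable_const
    hm.aestronglyMeasurable.restrict
  exact Filter.Eventually.of_forall fun x => hb x

lemma Kfacts {K : ℝ → ℝ} (hK : AssumpK K) : ∃ M C : ℝ, 0 ≤ M ∧ 0 ≤ C ∧ Measurable K ∧
    (∀ x, |K x| ≤ M) ∧
    (∀ x ∈ Set.Ioo (-1:ℝ) 0, ∀ y ∈ Set.Ioo (-1:ℝ) 0, |K x - K y| ≤ C * |x - y|) := by
  obtain ⟨hpos, hsupp, hint, L, hLip⟩ := hK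
  obtain ⟨g, hgL, hgeq⟩ := hLip.extend_real
  have hhalf : (-(1:ℝ)/2) ∈ Set.Ioo (-1:ℝ) 0 := by norm_num
  refine ⟨max (max (K (-1)) (K 0)) (K (-(1:ℝ)/2) + L), L, ?_, L.coe_nonneg, ?_, ?_, ?_⟩
  · exact le_trans (hpos (-1)) (le_max_of_le_left (le_max_left _ _))
  · -- measurability
    have hKeq : K = fun x => (Set.Ioo (-1:ℝ) 0).indicator g x +
        ({(-1:ℝ)} : Set ℝ).indicator (fun _ => K (-1)) x +
        ({(0:ℝ)} : Set ℝ).indicator (fun _ => K 0) x := by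
      funext x
      by_cases h1 : x ∈ Set.Ioo (-1:ℝ) 0
      · rw [Set.indicator_of_mem h1, Set.indicator_of_notMem, Set.indicator_of_notMem,
          ← hgeq h1]
        · ring
        · simp only [Set.mem_singleton_iff]; exact ne_of_lt h1.2
        · simp only [Set.mem_singleton_iff]; intro hc; rw [hc] at h1; exact absurd h1.1 (by norm_num)
      · by_cases h2 : x = -1
        · subst h2
          norm_num [Set.indicator_apply, h1]
        · by_cases h3 : x = 0
          · subst h3
            norm_num [Set.indicator_apply, h1]
          · have hxn : x ∉ Set.Icc (-1:ℝ) 0 := by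
              intro hc
              rcases hc with ⟨hc1, hc2⟩
              rcases lt_or_eq_of_le hc1 with h | h
              · rcases lt_or_eq_of_le hc2 with h' | h'
                · exact h1 ⟨h, h'⟩
                · exact h3 h'
              · exact h2 h.symm
            rw [hsupp x hxn, Set.indicator_of_notMem h1, Set.indicator_of_notMem,
              Set.indicator_of_notMem]
            · ring
            · simpa using h3
            · simpa using h2
    rw [hKeq]
    exact ((hgL.continuous.measurable.indicator measurableSet_Ioo).add
      (measurable_const.indicator (measurableSet_singleton _))).add
      (measurable_const.indicator (measurableSet_singleton _))
  · -- bound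
    intro x
    rw [abs_of_nonneg (hpos x)]
    by_cases h1 : x ∈ Set.Ioo (-1:ℝ) 0
    · have e1 : K x = g x := hgeq h1
      have e2 : K (-(1:ℝ)/2) = g (-(1:ℝ)/2) := hgeq hhalf
      have h3 : dist (g x) (g (-(1:ℝ)/2)) ≤ L * dist x (-(1:ℝ)/2) := hgL.dist_le_mul _ _
      have h4 : dist x (-(1:ℝ)/2) ≤ 1 := by
        rw [Real.dist_eq, abs_le]
        constructor <;> [linarith [h1.1]; linarith [h1.2]]
      have h5 : K x ≤ K (-(1:ℝ)/2) + L := by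
        rw [e1, e2]
        have := abs_le.1 (le_trans (le_of_eq (Real.dist_eq _ _).symm)
          (h3.trans (mul_le_mul_of_nonneg_left h4 L.coe_nonneg)) : |g x - g (-(1:ℝ)/2)| ≤ L * 1)
        linarith [this.2]
      exact le_trans h5 (le_max_right _ _)
    · by_cases h2 : x = -1
      · subst h2; exact le_max_of_le_left (le_max_left _ _)
      · by_cases h3 : x = 0
        · subst h3; exact le_max_of_le_left (le_max_right _ _)
        · have hxn : x ∉ Set.Icc (-1:ℝ) 0 := by
            intro hc
            rcases lt_or_eq_of_le hc.1 with h | h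
            · rcases lt_or_eq_of_le hc.2 with h' | h'
              · exact h1 ⟨h, h'⟩
              · exact h3 h'
            · exact h2 h.symm
          rw [hsupp x hxn]
          exact le_trans (hpos (-1)) (le_max_of_le_left (le_max_left _ _))
  · -- Lipschitz
    intro x hx y hy
    rw [hgeq hx, hgeq hy, ← Real.dist_eq, ← Real.dist_eq]
    exact hgL.dist_le_mul _ _


lemma flbd {K : ℝ → ℝ} {M : ℝ} (hM : 0 ≤ M) (hsupp : ∀ x, x ∉ Set.Icc (-1:ℝ) 0 → K x = 0)
    (hbd : ∀ x, |K x| ≤ M) (l : ℕ) : ∀ x, |x^l * K x| ≤ M := by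
  intro x
  by_cases hx : x ∈ Set.Icc (-1:ℝ) 0
  · rw [abs_mul, abs_pow]
    have h1 : |x| ≤ 1 := abs_le.2 ⟨hx.1, le_trans hx.2 zero_le_one⟩
    calc |x|^l * |K x| ≤ 1 * M :=
          mul_le_mul (pow_le_one₀ (abs_nonneg _) h1) (hbd x) (abs_nonneg _) zero_le_one
      _ = M := one_mul M
  · rw [hsupp x hx, mul_zero, abs_zero]; exact hM

lemma kappa_abs_le {K : ℝ → ℝ} {M : ℝ} (hM : 0 ≤ M)
    (hsupp : ∀ x, x ∉ Set.Icc (-1:ℝ) 0 → K x = 0)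
    (hbd : ∀ x, |K x| ≤ M) (l : ℕ) : |kappa K l| ≤ M := by
  have h := intervalIntegral.norm_integral_le_of_norm_le_const (C := M)
    (f := fun x => x^l * K x) (a := -1) (b := 0)
    (fun x _ => by rw [Real.norm_eq_abs]; exact flbd hM hsupp hbd l x)
  rw [Real.norm_eq_abs] at h
  calc |kappa K l| ≤ M * |(0:ℝ) - (-1)| := h
    _ = M := by norm_num

lemma Dpos {K : ℝ → ℝ} (hK : AssumpK K) : 0 < kappa K 0 * kappa K 2 - kappa K 1 ^ 2 := by
  obtain ⟨M, C, hM, hC, hmeas, hbd, hlip⟩ := Kfacts hK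
  obtain ⟨hpos, hsupp, hint, hLE⟩ := hK
  set c := kappa K 1 with hc
  have hfl : ∀ l : ℕ, IntervalIntegrable (fun x => x^l * K x) volume (-1) 0 := fun l =>
    intInt ((measurable_id.pow_const l).mul hmeas) (flbd hM hsupp hbd l) (-1) 0
  have e : (fun x => (x - c)^2 * K x) = fun x =>
      (x^2 * K x - (2*c) * (x^1 * K x)) + c^2 * (x^0 * K x) := by funext x; ring
  have hIcomb : IntervalIntegrable (fun x => (x - c)^2 * K x) volume (-1) 0 := by
    rw [e]
    exact ((hfl 2).sub ((hfl 1).const_mul _)).add ((hfl 0).const_mul _)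
  have hval : (∫ x in (-1:ℝ)..0, (x - c)^2 * K x)
      = kappa K 2 - 2*c*(kappa K 1) + c^2*(kappa K 0) := by
    have e2 : (∫ x in (-1:ℝ)..0, (x - c)^2 * K x)
        = ∫ x in (-1:ℝ)..0, ((x^2 * K x - (2*c) * (x^1 * K x)) + c^2 * (x^0 * K x)) :=
      intervalIntegral.integral_congr (fun x _ => by ring)
    rw [e2,
      intervalIntegral.integral_add ((hfl 2).sub ((hfl 1).const_mul _)) ((hfl 0).const_mul _),
      intervalIntegral.integral_sub (hfl 2) ((hfl 1).const_mul _),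
      intervalIntegral.integral_const_mul, intervalIntegral.integral_const_mul]
    simp only [kappa]
  have hnn : 0 ≤ ∫ x in (-1:ℝ)..0, (x - c)^2 * K x :=
    intervalIntegral.integral_nonneg (by norm_num)
      (fun u _ => mul_nonneg (sq_nonneg _) (hpos u))
  have hne : (∫ x in (-1:ℝ)..0, (x - c)^2 * K x) ≠ 0 := by
    intro h0
    have hae := (intervalIntegral.integral_eq_zero_iff_of_le_of_nonneg_ae (by norm_num)
      (Filter.Eventually.of_forall (fun x => mul_nonneg (sq_nonneg _) (hpos x))) hIcomb).1 h0
    have hnec : ∀ᵐ x ∂(volume.restrict (Set.Ioc (-1:ℝ) 0)), x ≠ c := by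
      apply ae_restrict_of_ae
      have h0' : volume ({c} : Set ℝ) = 0 := measure_singleton _
      filter_upwards [compl_mem_ae_iff.2 h0'] with x hx
      simpa using hx
    have hK0 : K =ᵐ[volume.restrict (Set.Ioc (-1:ℝ) 0)] 0 := by
      filter_upwards [hae, hnec] with x h1 h2
      have hsq : (x - c)^2 ≠ 0 := pow_ne_zero _ (sub_ne_zero.2 h2)
      have := mul_eq_zero.1 h1
      tauto
    have hz : (∫ x in (-1:ℝ)..0, K x) = 0 := by
      rw [intervalIntegral.integral_of_le (by norm_num : (-1:ℝ) ≤ 0)]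
      exact integral_eq_zero_of_ae hK0
    rw [hint] at hz; norm_num at hz
  have hposI : 0 < kappa K 2 - 2*c*(kappa K 1) + c^2*(kappa K 0) := by
    rw [← hval]; exact lt_of_le_of_ne hnn (Ne.symm hne)
  have h0 : kappa K 0 = 1 := by simpa [kappa] using hint
  rw [h0] at hposI ⊢
  nlinarith [hposI]


lemma prod_diff_bound {s s' k k' M e : ℝ} (hM : 0 ≤ M) (he : 0 ≤ e) (he1 : e ≤ 1)
    (h1 : |s - k| ≤ e) (h2 : |s' - k'| ≤ e) (hk : |k| ≤ M) (hk' : |k'| ≤ M) :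
    |s*s' - k*k'| ≤ 2*(M+1)*e := by
  have hs : |s| ≤ M + 1 := by
    calc |s| = |k + (s - k)| := by ring_nf
      _ ≤ |k| + |s - k| := abs_add_le _ _
      _ ≤ M + 1 := add_le_add hk (h1.trans he1)
  have hid : s*s' - k*k' = s*(s' - k') + k'*(s - k) := by ring
  calc |s*s' - k*k'| ≤ |s*(s'-k')| + |k'*(s-k)| := by rw [hid]; exact abs_add_le _ _
    _ ≤ (M+1)*e + M*e := add_le_add
        (by rw [abs_mul]; exact mul_le_mul hs h2 (abs_nonneg _) (by linarith))
        (by rw [abs_mul]; exact mul_le_mul hk' h1 (abs_nonneg _) hM)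
    _ ≤ 2*(M+1)*e := by nlinarith

lemma riemann (f : ℝ → ℝ) (M C : ℝ) (hM : 0 ≤ M) (hC : 0 ≤ C)
    (hmeas : Measurable f)
    (hsupp : ∀ x, x ∉ Set.Icc (-1:ℝ) 0 → f x = 0)
    (hbd : ∀ x, |f x| ≤ M)
    (hlip : ∀ x ∈ Set.Ioo (-1:ℝ) 0, ∀ y ∈ Set.Ioo (-1:ℝ) 0, |f x - f y| ≤ C * |x - y|)
    (N a : ℝ) (hN : 2 ≤ N) (ha : N ≤ a) :
    |(1/N) * ∑' i : ℕ, f (((i:ℝ) - a)/N) - ∫ x in (-1:ℝ)..0, f x| ≤ (2*C + 9*M) / N := by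
  have hN0 : (0:ℝ) < N := lt_of_lt_of_le two_pos hN
  have ha0 : (0:ℝ) ≤ a := le_trans (le_of_lt hN0) ha
  have haN0 : (0:ℝ) ≤ a - N := by linarith
  set n : ℕ := ⌊a⌋₊ + 1 with hn
  set m : ℕ := ⌊a - N⌋₊ with hm
  have hmr : (m:ℝ) ≤ a - N := Nat.floor_le haN0
  have hmr2 : a - N < (m:ℝ) + 1 := Nat.lt_floor_add_one _
  have hnr : a < (n:ℝ) := by
    have := Nat.lt_floor_add_one a
    push_cast [hn]; push_cast at this; linarith
  have hnr2 : (n:ℝ) ≤ a + 1 := by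
    have := Nat.floor_le ha0
    push_cast [hn]; linarith
  set u : ℕ → ℝ := fun k => ((k:ℝ) - 1 - a)/N with hu
  have hIf : ∀ p q : ℝ, IntervalIntegrable f volume p q := intInt hmeas hbd
  -- step 1: tsum is a finite sum
  have hts : ∑' i : ℕ, f (((i:ℝ) - a)/N) = ∑ i ∈ Finset.range n, f (((i:ℝ) - a)/N) := by
    apply tsum_eq_sum
    intro i hi
    apply hsupp
    have h0 : (n:ℝ) ≤ i := Nat.cast_le.2 (le_of_not_gt fun h => hi (Finset.mem_range.2 h))
    have h1 : a < (i:ℝ) := lt_of_lt_of_le hnr h0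
    intro hx
    exact absurd hx.2 (not_le.2 (div_pos (by linarith) hN0))
  -- step 2: per-interval estimate
  have key : ∀ i ∈ Finset.range n,
      |(1/N) * f (((i:ℝ) - a)/N) - ∫ x in u i..u (i+1), f x| ≤
        (if i = m ∨ i = m + 1 ∨ i = ⌊a⌋₊ then 2*M/N else 0) +
        (if m ≤ i then C/N^2 else 0) := by
    intro i hi
    have hi' : (i:ℝ) ≤ ⌊a⌋₊ := Nat.cast_le.2 (Nat.lt_succ_iff.1 (Finset.mem_range.1 hi))
    have hia : (i:ℝ) ≤ a := le_trans hi' (Nat.floor_le ha0)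
    have hb1 : u i = ((i:ℝ) - 1 - a)/N := rfl
    have hb2 : u (i+1) = ((i:ℝ) - a)/N := by
      simp only [hu]; push_cast; ring_nf
    have hlen : u (i+1) - u i = 1/N := by
      rw [hb1, hb2]; field_simp; ring
    have hle : u i ≤ u (i+1) := by rw [← sub_nonneg, hlen]; positivity
    have hsplit : (1/N) * f (((i:ℝ) - a)/N) - ∫ x in u i..u (i+1), f x
        = ∫ x in u i..u (i+1), (f (u (i+1)) - f x) := by
      rw [intervalIntegral.integral_sub intervalIntegrable_const (hIf _ _),
        intervalIntegral.integral_const, hlen, hb2]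
      simp [mul_comm]
    have hub2 : u (i+1) ≤ 0 := by
      rw [hb2]; apply div_nonpos_of_nonpos_of_nonneg (by linarith) (le_of_lt hN0)
    have hrhs0' : (0:ℝ) ≤ (if i = m ∨ i = m + 1 ∨ i = ⌊a⌋₊ then 2*M/N else 0) := by
      split <;> positivity
    by_cases hA : u (i+1) < -1
    · -- everything vanishes
      have h1 : f (((i:ℝ) - a)/N) = 0 := by
        rw [← hb2]; exact hsupp _ (fun hx => absurd hx.1 (not_le.2 hA))
      have h2 : (∫ x in u i..u (i+1), f x) = 0 := by
        rw [intervalIntegral.integral_congr (g := fun _ => (0:ℝ))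
            (fun x hx => by
              rw [Set.uIcc_of_le hle] at hx
              exact hsupp x (fun hx2 => absurd (le_trans hx2.1 hx.2) (not_le.2 hA)))]
        simp
      rw [h1, h2]
      simp only [mul_zero, sub_zero, abs_zero]
      positivity
    · push_neg at hA
      have hiaN : a - N ≤ (i:ℝ) := by
        have h := (le_div_iff₀ hN0).1 (hb2 ▸ hA)
        linarith
      have hmi : m ≤ i := by
        have : (m:ℝ) ≤ (i:ℝ) := le_trans hmr hiaN
        exact_mod_cast this
      rw [if_pos hmi]
      by_cases hB : u i ≤ -1 ∨ 0 ≤ u (i+1)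
      · -- boundary interval
        have hmem : i = m ∨ i = m + 1 ∨ i = ⌊a⌋₊ := by
          rcases hB with hB | hB
          · have h1 : (i:ℝ) ≤ a - N + 1 := by
              have h := (div_le_iff₀ hN0).1 (hb1 ▸ hB)
              linarith
            have h2 : (i:ℝ) < (m:ℝ) + 2 := by linarith
            have h3 : i < m + 2 := by exact_mod_cast h2
            omega
          · have h1 : a ≤ (i:ℝ) := by
              have h0 : (0:ℝ) ≤ (i:ℝ) - a := by
                have := (le_div_iff₀ hN0).1 (hb2 ▸ hB)
                linarith
              linarith
            right; right
            have h2 : ⌊a⌋₊ ≤ i := by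
              have : (⌊a⌋₊ : ℝ) ≤ (i:ℝ) := le_trans (Nat.floor_le ha0) h1
              exact_mod_cast this
            have h3 : i ≤ ⌊a⌋₊ := by exact_mod_cast hi'
            omega
        rw [if_pos hmem, hsplit]
        have hbd2 : |∫ x in u i..u (i+1), (f (u (i+1)) - f x)| ≤ (2*M) * |u (i+1) - u i| := by
          rw [← Real.norm_eq_abs]
          apply intervalIntegral.norm_integral_le_of_norm_le_const
          intro x _
          rw [Real.norm_eq_abs]
          calc |f (u (i+1)) - f x| ≤ |f (u (i+1))| + |f x| := abs_sub _ _
            _ ≤ 2*M := by linarith [hbd (u (i+1)), hbd x]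
        rw [hlen, abs_of_nonneg (by positivity : (0:ℝ) ≤ 1/N)] at hbd2
        have hCN : (0:ℝ) ≤ C/N^2 := by positivity
        calc _ ≤ (2*M) * (1/N) := hbd2
          _ = 2*M/N := by ring
          _ ≤ 2*M/N + C/N^2 := by linarith
      · push_neg at hB
        obtain ⟨hB1, hB2⟩ := hB
        rw [hsplit]
        have hlt : u i < u (i+1) := by
          rw [← sub_pos, hlen]; positivity
        have hmem2 : u (i+1) ∈ Set.Ioo (-1:ℝ) 0 := ⟨lt_trans hB1 hlt, hB2⟩
        have hbd2 : |∫ x in u i..u (i+1), (f (u (i+1)) - f x)| ≤ (C * (1/N)) * |u (i+1) - u i| := by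
          rw [← Real.norm_eq_abs]
          apply intervalIntegral.norm_integral_le_of_norm_le_const
          intro x hx
          rw [Set.uIoc_of_le hle] at hx
          rw [Real.norm_eq_abs]
          have hxm : x ∈ Set.Ioo (-1:ℝ) 0 :=
            ⟨lt_trans hB1 hx.1, lt_of_le_of_lt hx.2 hB2⟩
          calc |f (u (i+1)) - f x| ≤ C * |u (i+1) - x| := hlip _ hmem2 _ hxm
            _ ≤ C * (1/N) := by
                apply mul_le_mul_of_nonneg_left _ hC
                rw [abs_of_nonneg (by linarith [hx.2] : (0:ℝ) ≤ u (i+1) - x)]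
                linarith [hx.1, hlen]
        rw [hlen, abs_of_nonneg (by positivity : (0:ℝ) ≤ 1/N)] at hbd2
        calc _ ≤ (C * (1/N)) * (1/N) := hbd2
          _ = 0 + C/N^2 := by ring
          _ ≤ _ := by linarith
  -- step 3: assemble
  have hT : ∑ i ∈ Finset.range n, ∫ x in u i..u (i+1), f x = ∫ x in (u 0)..(u n), f x :=
    intervalIntegral.sum_integral_adjacent_intervals fun k _ => hIf _ _
  have hu0 : u 0 ≤ -1 := by
    have : u 0 = ((0:ℝ) - 1 - a)/N := by simp [hu]
    rw [this, div_le_iff₀ hN0]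
    linarith
  have hne : ∀ᵐ x : ℝ, x ≠ -1 := by
    have h0 : volume ({(-1:ℝ)} : Set ℝ) = 0 := measure_singleton _
    filter_upwards [compl_mem_ae_iff.2 h0] with x hx
    simpa using hx
  have hzero : (∫ x in (u 0)..(-1:ℝ), f x) = 0 := by
    rw [intervalIntegral.integral_congr_ae (g := fun _ => (0:ℝ)) ?_]
    · simp
    · filter_upwards [hne] with x hx hmem
      rw [Set.uIoc_of_le hu0] at hmem
      exact hsupp x fun hc => hx (le_antisymm hmem.2 hc.1)
  have e2 : ∫ x in (u 0)..(u n), f x = ∫ x in (-1:ℝ)..(u n), f x := by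
    rw [← intervalIntegral.integral_add_adjacent_intervals (hIf (u 0) (-1)) (hIf (-1) (u n)),
      hzero, zero_add]
  have e3 : ∫ x in (-1:ℝ)..(u n), f x
      = (∫ x in (-1:ℝ)..0, f x) - ∫ x in (u n)..(0:ℝ), f x := by
    rw [← intervalIntegral.integral_add_adjacent_intervals (hIf (-1) (u n)) (hIf (u n) 0)]
    ring
  have htail : |∫ x in (u n)..(0:ℝ), f x| ≤ M/N := by
    have h1 : |∫ x in (u n)..(0:ℝ), f x| ≤ M * |0 - u n| := by
      rw [← Real.norm_eq_abs]
      apply intervalIntegral.norm_integral_le_of_norm_le_const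
      intro x _
      rw [Real.norm_eq_abs]; exact hbd x
    have hun : u n = ((n:ℝ) - 1 - a)/N := rfl
    have h2 : |0 - u n| ≤ 1/N := by
      have hun0 : u n ≤ 0 := by
        rw [hun]
        apply div_nonpos_of_nonpos_of_nonneg (by linarith) (le_of_lt hN0)
      have heq : 0 - u n = (a + 1 - (n:ℝ))/N := by rw [hun]; field_simp; ring
      have hN1 : (0:ℝ) < 1/N := by positivity
      rw [abs_le]
      constructor
      · linarith
      · rw [heq]
        have hup : a + 1 - (n:ℝ) ≤ 1 := by linarith
        gcongr
    calc |∫ x in (u n)..(0:ℝ), f x| ≤ M * |0 - u n| := h1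
      _ ≤ M * (1/N) := mul_le_mul_of_nonneg_left h2 hM
      _ = M/N := by ring
  have h2MN : (0:ℝ) ≤ 2*M/N := by positivity
  have hS1 : ∑ i ∈ Finset.range n, (if i = m ∨ i = m+1 ∨ i = ⌊a⌋₊ then 2*M/N else 0)
      ≤ 6*M/N := by
    have hstep : ∀ i ∈ Finset.range n, (if i = m ∨ i = m+1 ∨ i = ⌊a⌋₊ then 2*M/N else 0) ≤
        (if i = m then 2*M/N else 0) + ((if i = m+1 then 2*M/N else 0) +
          (if i = ⌊a⌋₊ then 2*M/N else 0)) := by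
      intro i _
      split_ifs <;> first | (exfalso; tauto) | linarith
    refine (Finset.sum_le_sum hstep).trans ?_
    rw [Finset.sum_add_distrib, Finset.sum_add_distrib,
      Finset.sum_ite_eq' (Finset.range n) m, Finset.sum_ite_eq' (Finset.range n) (m+1),
      Finset.sum_ite_eq' (Finset.range n) ⌊a⌋₊]
    have b1 : (if m ∈ Finset.range n then 2*M/N else 0) ≤ 2*M/N := by
      split_ifs; exact le_rfl; exact h2MN
    have b2 : (if m+1 ∈ Finset.range n then 2*M/N else 0) ≤ 2*M/N := by
      split_ifs; exact le_rfl; exact h2MN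
    have b3 : (if ⌊a⌋₊ ∈ Finset.range n then 2*M/N else 0) ≤ 2*M/N := by
      split_ifs; exact le_rfl; exact h2MN
    refine (add_le_add b1 (add_le_add b2 b3)).trans (le_of_eq (by ring))
  have hS2 : ∑ i ∈ Finset.range n, (if m ≤ i then C/N^2 else 0) ≤ 2*C/N := by
    rw [← Finset.sum_filter]
    have hsub : (Finset.range n).filter (fun i => m ≤ i) ⊆ Finset.Ico m n := by
      intro i hi
      rw [Finset.mem_filter, Finset.mem_range] at hi
      exact Finset.mem_Ico.2 ⟨hi.2, hi.1⟩
    calc ∑ _i ∈ (Finset.range n).filter (fun i => m ≤ i), C/N^2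
        ≤ ∑ _i ∈ Finset.Ico m n, C/N^2 :=
          Finset.sum_le_sum_of_subset_of_nonneg hsub (fun _ _ _ => by positivity)
      _ = ((n - m : ℕ) : ℝ) * (C/N^2) := by
          rw [Finset.sum_const, Nat.card_Ico, nsmul_eq_mul]
      _ ≤ (N + 2) * (C/N^2) := by
          apply mul_le_mul_of_nonneg_right ?_ (by positivity)
          have hfloorN : N < (⌊N⌋₊:ℝ) + 1 := Nat.lt_floor_add_one N
          have hnm0 : (n:ℝ) < (m:ℝ) + (⌊N⌋₊:ℝ) + 3 := by linarith
          have hnm : n < m + ⌊N⌋₊ + 3 := by exact_mod_cast hnm0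
          have h3 : ((n - m : ℕ):ℝ) ≤ ((⌊N⌋₊ + 2 : ℕ):ℝ) := Nat.cast_le.2 (by omega)
          have h4 : ((⌊N⌋₊ : ℕ):ℝ) ≤ N := Nat.floor_le (by linarith)
          push_cast at h3
          linarith
      _ ≤ 2*C/N := by
          have hle2 : (N+2) ≤ 2*N := by linarith
          calc (N+2)*(C/N^2) ≤ (2*N)*(C/N^2) :=
                mul_le_mul_of_nonneg_right hle2 (by positivity)
            _ = 2*C/N := by field_simp
  have emain : (1/N) * (∑ i ∈ Finset.range n, f (((i:ℝ)-a)/N)) - (∫ x in (-1:ℝ)..0, f x)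
      = (∑ i ∈ Finset.range n, ((1/N) * f (((i:ℝ)-a)/N) - ∫ x in u i..u (i+1), f x))
        - ∫ x in (u n)..(0:ℝ), f x := by
    rw [Finset.sum_sub_distrib, hT, e2, e3, Finset.mul_sum]
    ring
  rw [hts, emain]
  calc |(∑ i ∈ Finset.range n, ((1/N) * f (((i:ℝ)-a)/N) - ∫ x in u i..u (i+1), f x))
        - ∫ x in (u n)..(0:ℝ), f x|
      ≤ |∑ i ∈ Finset.range n, ((1/N) * f (((i:ℝ)-a)/N) - ∫ x in u i..u (i+1), f x)|
        + |∫ x in (u n)..(0:ℝ), f x| := abs_sub _ _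
    _ ≤ (∑ i ∈ Finset.range n, ((if i = m ∨ i = m + 1 ∨ i = ⌊a⌋₊ then 2*M/N else 0) +
          (if m ≤ i then C/N^2 else 0))) + M/N :=
        add_le_add ((Finset.abs_sum_le_sum_abs _ _).trans (Finset.sum_le_sum key)) htail
    _ ≤ (6*M/N + 2*C/N) + M/N := by
        rw [Finset.sum_add_distrib]
        exact add_le_add (add_le_add hS1 hS2) le_rfl
    _ ≤ (2*C + 9*M)/N := by
        have heq : (2*C + 9*M)/N - (6*M/N + 2*C/N + M/N) = 2*M/N := by
          field_simp
          ring
        linarith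


lemma pow_sub_abs {x y : ℝ} (hx : |x| ≤ 1) (hy : |y| ≤ 1) (l : ℕ) :
    |x ^ l - y ^ l| ≤ l * |x - y| := by
  induction l with
  | zero => simp
  | succ l ih =>
    have h1 : x ^ (l+1) - y ^ (l+1) = x * (x ^ l - y ^ l) + (x - y) * y ^ l := by ring
    have h2 : |x * (x ^ l - y ^ l)| ≤ l * |x - y| := by
      rw [abs_mul]
      calc |x| * |x ^ l - y ^ l| ≤ 1 * (l * |x - y|) :=
            mul_le_mul hx ih (abs_nonneg _) zero_le_one
        _ = l * |x - y| := one_mul _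
    have h3 : |(x - y) * y ^ l| ≤ |x - y| := by
      rw [abs_mul, abs_pow]
      calc |x - y| * |y| ^ l ≤ |x - y| * 1 :=
            mul_le_mul_of_nonneg_left (pow_le_one₀ (abs_nonneg _) hy) (abs_nonneg _)
        _ = |x - y| := mul_one _
    calc |x ^ (l+1) - y ^ (l+1)| ≤ |x * (x ^ l - y ^ l)| + |(x - y) * y ^ l| := by
          rw [h1]; exact abs_add_le _ _
      _ ≤ l * |x - y| + |x - y| := add_le_add h2 h3
      _ = (l+1 : ℕ) * |x - y| := by push_cast; ring

end BiasCUA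

set_option maxHeartbeats 1000000 in
/-- Uniform approximation of the bias constant:
κ₀κ₂ − κ₁² > 0 and sup_{t ≥ h} |(S₂² − S₁S₃)/(S₀S₂ − S₁²) − (κ₂² − κ₁κ₃)/(κ₀κ₂ − κ₁²)|
≤ C/(n h). -/
theorem bias_constant_uniform_approximation (K : ℝ → ℝ) (hK : AssumpK K) :
    0 < kappa K 0 * kappa K 2 - kappa K 1 ^ 2 ∧
    ∃ C c₀ : ℝ, 0 < c₀ ∧ ∀ (n : ℕ) (h : ℝ), 0 < h → h ≤ 1 → c₀ ≤ (n : ℝ) * h →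
      ∀ t : ℝ, h ≤ t →
        |(Sl K n h 2 t ^ 2 - Sl K n h 1 t * Sl K n h 3 t) /
            (Sl K n h 0 t * Sl K n h 2 t - Sl K n h 1 t ^ 2) -
          (kappa K 2 ^ 2 - kappa K 1 * kappa K 3) /
            (kappa K 0 * kappa K 2 - kappa K 1 ^ 2)| ≤ C / ((n : ℝ) * h) := by
  classical
  obtain ⟨M, CL, hM, hCL, hmeas, hbd, hlip⟩ := BiasCUA.Kfacts hK
  have hsupp := hK.2.1
  refine ⟨BiasCUA.Dpos hK, ?_⟩
  set D := kappa K 0 * kappa K 2 - kappa K 1 ^ 2 with hD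
  have hDpos : 0 < D := BiasCUA.Dpos hK
  set Cf : ℝ := CL + 3*M with hCf
  have hCf0 : 0 ≤ Cf := by positivity
  set A : ℝ := 2*Cf + 9*M with hA
  have hA0 : 0 ≤ A := by positivity
  set B1 : ℝ := 4*(M+1)*A with hB1
  have hB10 : 0 ≤ B1 := by positivity
  refine ⟨2*(D + 2*M^2)*B1/D^2, 2 + A + 2*B1/D, by positivity, ?_⟩
  intro n h hh0 hh1 hc0 t ht
  have hBD0 : 0 ≤ 2*B1/D := by positivity
  set N : ℝ := (n:ℝ) * h with hNdef
  have hN2 : 2 ≤ N := by linarith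
  have hN0 : 0 < N := lt_of_lt_of_le two_pos hN2
  have hNA : A ≤ N := by linarith
  have hND : 2*B1/D ≤ N := by linarith
  have ha : N ≤ (n:ℝ)*t := by
    rw [hNdef]
    exact mul_le_mul_of_nonneg_left ht (Nat.cast_nonneg n)
  have hSl : ∀ l : ℕ, l ≤ 3 → |Sl K n h l t - kappa K l| ≤ A / N := by
    intro l hl
    have hbd' : ∀ x, |x^l * K x| ≤ M := BiasCUA.flbd hM hsupp hbd l
    have hsupp' : ∀ x, x ∉ Set.Icc (-1:ℝ) 0 → x^l * K x = 0 := fun x hx => by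
      rw [hsupp x hx, mul_zero]
    have hlip' : ∀ x ∈ Set.Ioo (-1:ℝ) 0, ∀ y ∈ Set.Ioo (-1:ℝ) 0,
        |x^l*K x - y^l*K y| ≤ Cf * |x - y| := by
      intro x hx y hy
      have h1x : |x| ≤ 1 := abs_le.2 ⟨le_of_lt hx.1, le_of_lt (lt_of_lt_of_le hx.2 zero_le_one)⟩
      have h1y : |y| ≤ 1 := abs_le.2 ⟨le_of_lt hy.1, le_of_lt (lt_of_lt_of_le hy.2 zero_le_one)⟩
      have hid : x^l*K x - y^l*K y = x^l*(K x - K y) + (x^l - y^l)*K y := by ring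
      have hl3 : (l:ℝ) ≤ 3 := by exact_mod_cast hl
      calc |x^l*K x - y^l*K y| ≤ |x^l*(K x - K y)| + |(x^l - y^l)*K y| := by
            rw [hid]; exact abs_add_le _ _
        _ ≤ 1*(CL*|x-y|) + ((l:ℝ)*|x-y|)*M := by
            refine add_le_add ?_ ?_
            · rw [abs_mul, abs_pow]
              exact mul_le_mul (pow_le_one₀ (abs_nonneg _) h1x) (hlip x hx y hy)
                (abs_nonneg _) zero_le_one
            · rw [abs_mul]
              exact mul_le_mul (BiasCUA.pow_sub_abs h1x h1y l) (hbd y) (abs_nonneg _)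
                (by positivity)
        _ ≤ Cf * |x-y| := by
            rw [hCf]
            have hp : (l:ℝ) * (|x-y| * M) ≤ 3 * (|x-y| * M) :=
              mul_le_mul_of_nonneg_right hl3 (mul_nonneg (abs_nonneg _) hM)
            nlinarith [hp]
    have hr := BiasCUA.riemann (fun x => x^l * K x) M Cf hM hCf0
      ((measurable_id.pow_const l).mul hmeas) hsupp' hbd' hlip' N ((n:ℝ)*t) hN2 ha
    rw [hA]
    exact hr
  have E0 := hSl 0 (by norm_num)
  have E1 := hSl 1 (by norm_num)
  have E2 := hSl 2 (by norm_num)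
  have E3 := hSl 3 (by norm_num)
  have kb : ∀ l : ℕ, |kappa K l| ≤ M := BiasCUA.kappa_abs_le hM hsupp hbd
  have heA : A/N ≤ 1 := by rw [div_le_one hN0]; exact hNA
  have heA0 : 0 ≤ A/N := by positivity
  set S0 := Sl K n h 0 t
  set S1 := Sl K n h 1 t
  set S2 := Sl K n h 2 t
  set S3 := Sl K n h 3 t
  set k0 := kappa K 0
  set k1 := kappa K 1
  set k2 := kappa K 2
  set k3 := kappa K 3
  have hden : |S0*S2 - S1^2 - D| ≤ B1/N := by
    have h1 := BiasCUA.prod_diff_bound hM heA0 heA E0 E2 (kb 0) (kb 2)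
    have h2 := BiasCUA.prod_diff_bound hM heA0 heA E1 E1 (kb 1) (kb 1)
    have hid : S0*S2 - S1^2 - D = (S0*S2 - k0*k2) - (S1*S1 - k1*k1) := by rw [hD]; ring
    calc |S0*S2 - S1^2 - D| ≤ |S0*S2 - k0*k2| + |S1*S1 - k1*k1| := by
          rw [hid]; exact abs_sub _ _
      _ ≤ 2*(M+1)*(A/N) + 2*(M+1)*(A/N) := add_le_add h1 h2
      _ = B1/N := by rw [hB1]; ring
  have hnum : |S2^2 - S1*S3 - (k2^2 - k1*k3)| ≤ B1/N := by
    have h1 := BiasCUA.prod_diff_bound hM heA0 heA E2 E2 (kb 2) (kb 2)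
    have h2 := BiasCUA.prod_diff_bound hM heA0 heA E1 E3 (kb 1) (kb 3)
    have hid : S2^2 - S1*S3 - (k2^2 - k1*k3) = (S2*S2 - k2*k2) - (S1*S3 - k1*k3) := by ring
    calc |S2^2 - S1*S3 - (k2^2 - k1*k3)| ≤ |S2*S2 - k2*k2| + |S1*S3 - k1*k3| := by
          rw [hid]; exact abs_sub _ _
      _ ≤ 2*(M+1)*(A/N) + 2*(M+1)*(A/N) := add_le_add h1 h2
      _ = B1/N := by rw [hB1]; ring
  have hBN : B1/N ≤ D/2 := by
    have h1 : 2*B1 ≤ N*D := by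
      have := (div_le_iff₀ hDpos).1 hND
      linarith
    rw [div_le_div_iff₀ hN0 two_pos]
    linarith
  have hdenlow : D/2 ≤ S0*S2 - S1^2 := by
    have := abs_le.1 hden
    linarith [this.1]
  have hden0 : 0 < S0*S2 - S1^2 := lt_of_lt_of_le (by positivity) hdenlow
  have hnumk : |k2^2 - k1*k3| ≤ 2*M^2 := by
    calc |k2^2 - k1*k3| ≤ |k2^2| + |k1*k3| := abs_sub _ _
      _ ≤ M^2 + M*M := by
          refine add_le_add ?_ ?_
          · rw [abs_pow]; exact pow_le_pow_left₀ (abs_nonneg _) (kb 2) 2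
          · rw [abs_mul]; exact mul_le_mul (kb 1) (kb 3) (abs_nonneg _) hM
      _ = 2*M^2 := by ring
  rw [div_sub_div _ _ (ne_of_gt hden0) (ne_of_gt hDpos), abs_div]
  have hXnum : |(S2^2 - S1*S3)*D - (S0*S2 - S1^2)*(k2^2 - k1*k3)| ≤ (D + 2*M^2)*(B1/N) := by
    have hid : (S2^2 - S1*S3)*D - (S0*S2 - S1^2)*(k2^2 - k1*k3)
        = (S2^2 - S1*S3 - (k2^2 - k1*k3))*D + (k2^2 - k1*k3)*(D - (S0*S2 - S1^2)) := by ring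
    calc |(S2^2 - S1*S3)*D - (S0*S2 - S1^2)*(k2^2 - k1*k3)|
        ≤ |(S2^2 - S1*S3 - (k2^2 - k1*k3))*D| + |(k2^2 - k1*k3)*(D - (S0*S2 - S1^2))| := by
          rw [hid]; exact abs_add_le _ _
      _ ≤ (B1/N)*D + (2*M^2)*(B1/N) := by
          refine add_le_add ?_ ?_
          · rw [abs_mul, abs_of_pos hDpos]
            exact mul_le_mul_of_nonneg_right hnum (le_of_lt hDpos)
          · rw [abs_mul, abs_sub_comm D (S0*S2 - S1^2)]
            exact mul_le_mul hnumk hden (abs_nonneg _) (by positivity)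
      _ = (D + 2*M^2)*(B1/N) := by ring
  have hYden : D^2/2 ≤ |(S0*S2 - S1^2)*D| := by
    rw [abs_of_pos (mul_pos hden0 hDpos)]
    nlinarith [hdenlow, hDpos]
  calc |(S2^2 - S1*S3)*D - (S0*S2 - S1^2)*(k2^2 - k1*k3)| / |(S0*S2 - S1^2)*D|
      ≤ ((D + 2*M^2)*(B1/N)) / (D^2/2) :=
        div_le_div₀ (by positivity) hXnum (by positivity) hYden
    _ = 2*(D + 2*M^2)*B1/D^2/N := by field_simp

end
end

section
/- Suppose Assumption K holds. Then the kernel b̄K satisfies ∫_{−1}^0 b̄K(x) dx = 1 and ∫_{−1}^0 x b̄K(x) dx = 0, and the Jackknife kernel K* satisfies ∫_ℝ K*(x) dx = 1, ∫_ℝ x K*(x) dx = 0, and ∫_ℝ x² K*(x) dx = 0; that is, K* is a kernel of order at least 3, so the Jackknife combination 2 μ̂_{h/√2} − μ̂_h cancels the second-order bias term of the local linear estimator. -/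
open MeasureTheory Filter Real Set
open scoped ENNReal NNReal Topology

noncomputable section

/-- Moment identities for the local linear kernel b̄K and the Jackknife kernel K*:
b̄K has mass one and vanishing first moment, and K* has mass one and vanishing first and
second moments (it is a kernel of order at least 3). -/
theorem jackknife_kernel_moments (K : ℝ → ℝ) (hK : AssumpK K) :
    (∫ x in (-1 : ℝ)..0, barK K x) = 1 ∧
    (∫ x in (-1 : ℝ)..0, x * barK K x) = 0 ∧
    (∫ x : ℝ, Kstar K x) = 1 ∧
    (∫ x : ℝ, x * Kstar K x) = 0 ∧
    (∫ x : ℝ, x ^ 2 * Kstar K x) = 0 := by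
  obtain ⟨hKpos, hKsupp, hKint, C, hKlip⟩ := hK
  -- basic measure identities
  have hrOc : volume.restrict (Set.Ioc (-1:ℝ) 0) = volume.restrict (Set.Ioo (-1:ℝ) 0) :=
    (Measure.restrict_congr_set Ioo_ae_eq_Ioc).symm
  have hrcc : volume.restrict (Set.Icc (-1:ℝ) 0) = volume.restrict (Set.Ioo (-1:ℝ) 0) :=
    (Measure.restrict_congr_set Ioo_ae_eq_Icc).symm
  -- K measurable on Ioo
  have hKaes : AEStronglyMeasurable K (volume.restrict (Set.Ioo (-1:ℝ) 0)) :=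
    hKlip.continuousOn.aestronglyMeasurable measurableSet_Ioo
  -- K bounded on Ioo
  have hhalf : (-1/2 : ℝ) ∈ Set.Ioo (-1:ℝ) 0 := by norm_num
  have hM : ∀ x ∈ Set.Ioo (-1:ℝ) 0, |K x| ≤ |K (-1/2)| + C := by
    intro x hx
    have hd := hKlip.dist_le_mul x hx (-1/2) hhalf
    rw [Real.dist_eq, Real.dist_eq] at hd
    have hx1 : |x - (-1/2)| ≤ 1 := by
      rw [abs_le]; constructor <;> [linarith [hx.1]; linarith [hx.2]]
    have h1 : |K x| ≤ |K x - K (-1/2)| + |K (-1/2)| := by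
      have := abs_add_le (K x - K (-1/2)) (K (-1/2)); simpa using this
    have h2 : (C : ℝ) * |x - (-1/2)| ≤ C := by
      have := mul_le_mul_of_nonneg_left hx1 C.coe_nonneg; simpa using this
    linarith
  -- generic integrability
  have key : ∀ g : ℝ → ℝ, Continuous g →
      IntegrableOn (fun x => g x * K x) (Set.Ioc (-1:ℝ) 0) volume := by
    intro g hg
    obtain ⟨Mg, hMg⟩ :=
      (isCompact_Icc (a := (-1:ℝ)) (b := 0)).exists_bound_of_continuousOn hg.continuousOn
    rw [IntegrableOn, hrOc]
    refine ⟨hg.aestronglyMeasurable.mul hKaes,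
      HasFiniteIntegral.restrict_of_bounded (C := Mg * (|K (-1/2)| + C))
        measure_Ioo_lt_top ?_⟩
    filter_upwards [ae_restrict_mem measurableSet_Ioo] with x hx
    have h1 := hM x hx
    have h2 := hMg x (Set.mem_Icc_of_Ioo hx)
    have h3 : (0:ℝ) ≤ Mg := le_trans (norm_nonneg _) h2
    have : ‖g x * K x‖ = |g x| * |K x| := abs_mul _ _
    rw [this]
    exact mul_le_mul h2 h1 (abs_nonneg _) h3
  have keyI : ∀ g : ℝ → ℝ, Continuous g →
      IntervalIntegrable (fun x => g x * K x) volume (-1) 0 := fun g hg =>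
    (intervalIntegrable_iff_integrableOn_Ioc_of_le (by norm_num)).2 (key g hg)
  have keyP : ∀ l : ℕ, IntervalIntegrable (fun x => x ^ l * K x) volume (-1) 0 :=
    fun l => keyI _ (continuous_pow l)
  have rP : ∀ l : ℕ, (∫ x in (-1:ℝ)..0, x ^ l * K x) = kappa K l := fun l => rfl
  have hle : (-1:ℝ) ≤ 0 := by norm_num
  -- kappa values as set integrals
  have hkap : ∀ l : ℕ, kappa K l = ∫ x in Set.Ioc (-1:ℝ) 0, x ^ l * K x := fun l =>
    intervalIntegral.integral_of_le hle
  have hk0 : kappa K 0 = 1 := by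
    have : kappa K 0 = ∫ x in (-1:ℝ)..0, K x := by
      simp only [kappa, pow_zero, one_mul]
    rw [this, hKint]
  set κ1 := kappa K 1 with hκ1
  set κ2 := kappa K 2 with hκ2
  -- positivity of the determinant
  have hintK : IntegrableOn K (Set.Ioc (-1:ℝ) 0) volume := by
    have := key (fun _ => (1:ℝ)) continuous_const; simpa using this
  have hKnn : 0 ≤ᵐ[volume.restrict (Set.Ioc (-1:ℝ) 0)] K :=
    Filter.Eventually.of_forall hKpos
  have hsuppK : 0 < volume (Function.support K ∩ Set.Ioc (-1:ℝ) 0) := by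
    rw [← setIntegral_pos_iff_support_of_nonneg_ae hKnn hintK]
    have : ∫ x in Set.Ioc (-1:ℝ) 0, K x = 1 := by
      rw [← intervalIntegral.integral_of_le hle]; exact hKint
    rw [this]; norm_num
  set f : ℝ → ℝ := fun x => (x - κ1)^2 * K x with hf
  have hintf : IntegrableOn f (Set.Ioc (-1:ℝ) 0) volume :=
    key (fun x => (x - κ1)^2) ((continuous_id.sub continuous_const).pow 2)
  have hfnn : 0 ≤ᵐ[volume.restrict (Set.Ioc (-1:ℝ) 0)] f :=
    Filter.Eventually.of_forall (fun x => mul_nonneg (sq_nonneg _) (hKpos x))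
  have hsuppf : 0 < volume (Function.support f ∩ Set.Ioc (-1:ℝ) 0) := by
    have hsub : Function.support K ∩ Set.Ioc (-1:ℝ) 0 ⊆
        (Function.support f ∩ Set.Ioc (-1:ℝ) 0) ∪ {κ1} := by
      rintro x ⟨hx1, hx2⟩
      by_cases hxe : x = κ1
      · exact Or.inr hxe
      · exact Or.inl ⟨mul_ne_zero (pow_ne_zero _ (sub_ne_zero.2 hxe)) hx1, hx2⟩
    have h2 : volume ({κ1} : Set ℝ) = 0 := measure_singleton κ1
    have h3 : volume ((Function.support f ∩ Set.Ioc (-1:ℝ) 0) ∪ {κ1}) ≤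
        volume (Function.support f ∩ Set.Ioc (-1:ℝ) 0) + volume ({κ1} : Set ℝ) :=
      measure_union_le _ _
    have := (measure_mono hsub).trans h3
    rw [h2, add_zero] at this
    exact lt_of_lt_of_le hsuppK this
  have hfpos : 0 < ∫ x in Set.Ioc (-1:ℝ) 0, f x :=
    (setIntegral_pos_iff_support_of_nonneg_ae hfnn hintf).2 hsuppf
  have hfval : ∫ x in Set.Ioc (-1:ℝ) 0, f x = κ2 - 2*κ1*κ1 + κ1^2 * kappa K 0 := by
    rw [← intervalIntegral.integral_of_le hle]
    have e : ∀ x ∈ Set.uIcc (-1:ℝ) 0, f x =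
        x^2*K x - (2*κ1)*(x^1*K x) + κ1^2*(x^0*K x) := by
      intro x _; simp only [hf]; ring
    rw [intervalIntegral.integral_congr e,
      intervalIntegral.integral_add ((keyP 2).sub ((keyP 1).const_mul (2*κ1)))
        ((keyP 0).const_mul (κ1^2)),
      intervalIntegral.integral_sub (keyP 2) ((keyP 1).const_mul (2*κ1)),
      intervalIntegral.integral_const_mul, intervalIntegral.integral_const_mul,
      rP 2, rP 1, rP 0, ← hκ1, ← hκ2]
  set D := kappa K 0 * κ2 - κ1 ^ 2 with hD
  have hDpos : 0 < D := by
    rw [hfval, hk0] at hfpos; rw [hD, hk0]; nlinarith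
  have hDne : D ≠ 0 := ne_of_gt hDpos
  -- barK as g * K
  have hbarKeq : ∀ x, barK K x = ((κ2 - κ1 * x)/D) * K x := by
    intro x; simp only [barK, hD, hκ1, hκ2]
  -- moment 0 of barK
  have hbar0 : (∫ x in (-1:ℝ)..0, barK K x) = 1 := by
    have e : ∀ x ∈ Set.uIcc (-1:ℝ) 0, barK K x =
        (κ2/D)*(x^0*K x) - (κ1/D)*(x^1*K x) := by
      intro x _; rw [hbarKeq]; ring
    rw [intervalIntegral.integral_congr e,
      intervalIntegral.integral_sub ((keyP 0).const_mul _) ((keyP 1).const_mul _),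
      intervalIntegral.integral_const_mul, intervalIntegral.integral_const_mul,
      rP 0, rP 1, ← hκ1]
    field_simp [hD]
    ring
  have hbar1 : (∫ x in (-1:ℝ)..0, x * barK K x) = 0 := by
    have e : ∀ x ∈ Set.uIcc (-1:ℝ) 0, x * barK K x =
        (κ2/D)*(x^1*K x) - (κ1/D)*(x^2*K x) := by
      intro x _; rw [hbarKeq]; ring
    rw [intervalIntegral.integral_congr e,
      intervalIntegral.integral_sub ((keyP 1).const_mul _) ((keyP 2).const_mul _),
      intervalIntegral.integral_const_mul, intervalIntegral.integral_const_mul,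
      rP 1, rP 2, ← hκ1, ← hκ2]
    field_simp
    ring
  -- globalization
  have hglob : ∀ g : ℝ → ℝ, (∀ x ∉ Set.Icc (-1:ℝ) 0, g x = 0) →
      IntegrableOn g (Set.Ioc (-1:ℝ) 0) volume →
      Integrable g volume ∧ (∫ x, g x) = ∫ x in (-1:ℝ)..0, g x := by
    intro g hg0 hgi
    have hind : Set.indicator (Set.Icc (-1:ℝ) 0) g = g :=
      Set.indicator_eq_self.2 (Function.support_subset_iff'.2 hg0)
    have hIcc : IntegrableOn g (Set.Icc (-1:ℝ) 0) volume := by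
      rw [IntegrableOn, hrcc]; rw [IntegrableOn, hrOc] at hgi; exact hgi
    have hint : Integrable g volume := by
      rw [← hind]; exact (integrable_indicator_iff measurableSet_Icc).2 hIcc
    refine ⟨hint, ?_⟩
    calc ∫ x, g x = ∫ x, Set.indicator (Set.Icc (-1:ℝ) 0) g x := by rw [hind]
    _ = ∫ x in Set.Icc (-1:ℝ) 0, g x := integral_indicator measurableSet_Icc
    _ = ∫ x in Set.Ioc (-1:ℝ) 0, g x := by rw [hrcc, ← hrOc]
    _ = ∫ x in (-1:ℝ)..0, g x := (intervalIntegral.integral_of_le hle).symm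
  have hbar_supp : ∀ l : ℕ, ∀ x ∉ Set.Icc (-1:ℝ) 0, x ^ l * barK K x = 0 := by
    intro l x hx; rw [hbarKeq, hKsupp x hx]; ring
  have hbar_on : ∀ l : ℕ, IntegrableOn (fun x => x ^ l * barK K x)
      (Set.Ioc (-1:ℝ) 0) volume := by
    intro l
    have := key (fun x => x ^ l * ((κ2 - κ1 * x)/D))
      (((continuous_pow l).mul ((continuous_const.sub
        (continuous_const.mul continuous_id)).div_const D)))
    have e : (fun x => x ^ l * barK K x) =
        fun x => (x ^ l * ((κ2 - κ1 * x)/D)) * K x := by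
      funext x; rw [hbarKeq]; ring
    rw [e]; exact this
  have hG := fun l : ℕ => hglob (fun x => x ^ l * barK K x) (hbar_supp l) (hbar_on l)
  have hI0 : (∫ x : ℝ, barK K x) = 1 := by
    have h := hG 0
    simp only [pow_zero, one_mul] at h
    rw [h.2]; exact hbar0
  have hI0int : Integrable (barK K) volume := by
    have h := (hG 0).1; simpa using h
  have hI1 : (∫ x : ℝ, x * barK K x) = 0 := by
    have h := hG 1
    simp only [pow_one] at h
    rw [h.2]; exact hbar1
  have hI1int : Integrable (fun x => x * barK K x) volume := by
    have h := (hG 1).1; simpa using h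
  have hI2int : Integrable (fun x => x ^ 2 * barK K x) volume := (hG 2).1
  -- sqrt 2 facts
  set s := Real.sqrt 2 with hs
  have hspos : 0 < s := Real.sqrt_pos.2 (by norm_num)
  have hs2 : s ^ 2 = 2 := Real.sq_sqrt (by norm_num)
  have hcomp : ∀ g : ℝ → ℝ, (∫ x, g (s * x)) = s⁻¹ * ∫ x, g x := by
    intro g
    rw [Measure.integral_comp_mul_left g s, abs_of_pos (inv_pos.2 hspos), smul_eq_mul]
  -- Kstar moment 0
  have hKs0 : (∫ x : ℝ, Kstar K x) = 1 := by
    have e : (fun x => Kstar K x) =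
        fun x => (2*s) * barK K (s*x) - barK K x := by
      funext x; simp only [Kstar, hs]
    rw [e, integral_sub ((hI0int.comp_mul_left' hspos.ne').const_mul _) hI0int,
      integral_const_mul, hcomp (barK K), hI0]
    rw [mul_one, mul_assoc, mul_inv_cancel₀ hspos.ne', mul_one]
    norm_num
  -- Kstar moment 1
  have hKs1 : (∫ x : ℝ, x * Kstar K x) = 0 := by
    have e : (fun x => x * Kstar K x) =
        fun x => 2 * ((fun u => u * barK K u) (s*x)) - (fun u => u * barK K u) x := by
      funext x; simp only [Kstar, hs]; ring
    rw [e, integral_sub ((hI1int.comp_mul_left' hspos.ne').const_mul _) hI1int,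
      integral_const_mul, hcomp (fun u => u * barK K u), hI1]
    simp
  -- Kstar moment 2
  have hKs2 : (∫ x : ℝ, x ^ 2 * Kstar K x) = 0 := by
    have e : (fun x => x ^ 2 * Kstar K x) =
        fun x => s * ((fun u => u ^ 2 * barK K u) (s*x)) - (fun u => u ^ 2 * barK K u) x := by
      funext x; simp only [Kstar, hs]
      linear_combination (-(s * x ^ 2 * barK K (s * x))) * hs2
    rw [e, integral_sub ((hI2int.comp_mul_left' hspos.ne').const_mul _) hI2int,
      integral_const_mul, hcomp (fun u => u ^ 2 * barK K u), ← mul_assoc,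
      mul_inv_cancel₀ hspos.ne', one_mul, sub_self]
  exact ⟨hbar0, hbar1, hKs0, hKs1, hKs2⟩


end
end
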